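/- Let m ≥ 3 be an integer with m ≠ 5 and let n ≥ 2 be an integer. Then for every integer i with 0 ≤ i ≤ n−1, the least element of T(n) \ R'((n, n+1, …, n+i)) is n+i+1; in particular, the m-gonal form n·P_m(x_0) + (n+1)·P_m(x_1) + ⋯ + (n+i)·P_m(x_i) represents all integers n, n+1, …, n+i but does not represent n+i+1. -/

import Mathlib

def IsGP (m s : ℤ) : Prop := ∃ u : ℤ, 2 * s = (m - 2) * u ^ 2 - (m - 4) * u

def Rset (m : ℤ) (a : List ℤ) : Set ℤ :=
  {x | x ≠ 0 ∧ ∃ s : List ℤ, s.length = a.length ∧ (∀ y ∈ s, IsGP m y) ∧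
      x = (List.zipWith (· * ·) a s).sum}

lemma gp_cases {m s : ℤ} (hm : 3 ≤ m) (hm5 : m ≠ 5) (h : IsGP m s) :
    s = 0 ∨ s = 1 ∨ 3 ≤ s := by
  obtain ⟨u, hu⟩ := h
  have key : 2 * s = (m - 3) * (u * (u - 1)) + u * (u + 1) := by rw [hu]; ring
  have h1 : 0 ≤ u * (u - 1) := by
    rcases le_or_gt 1 u with h | h
    · exact mul_nonneg (by linarith) (by linarith)
    · exact mul_nonneg_iff.mpr (Or.inr ⟨by linarith, by linarith⟩)
  have h2 : 0 ≤ u * (u + 1) := by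
    rcases le_or_gt 0 u with h | h
    · exact mul_nonneg h (by linarith)
    · exact mul_nonneg_iff.mpr (Or.inr ⟨by linarith, by linarith⟩)
  have hm3 : 0 ≤ m - 3 := by linarith
  have hs0 : 0 ≤ s := by nlinarith [mul_nonneg hm3 h1]
  have hs2 : s ≠ 2 := by
    intro hs; subst hs
    rcases le_or_gt 3 u with h | h
    · nlinarith [mul_nonneg hm3 h1]
    rcases le_or_gt u (-3) with h' | h'
    · nlinarith [mul_nonneg hm3 h1]
    · interval_cases u <;> omega
  omega

lemma sum_cases (c : ℤ) (hc : 1 ≤ c) :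
    ∀ (a s : List ℤ), a.length = s.length →
      a.Pairwise (· < ·) → (∀ x ∈ a, c ≤ x) →
      (∀ y ∈ s, y = 0 ∨ y = 1 ∨ 3 ≤ y) →
      0 ≤ (List.zipWith (· * ·) a s).sum ∧
        ((List.zipWith (· * ·) a s).sum = 0 ∨
          (List.zipWith (· * ·) a s).sum ∈ a ∨
          2 * c + 1 ≤ (List.zipWith (· * ·) a s).sum) := by
  intro a
  induction a with
  | nil => intro s _ _ _ _; simp
  | cons a0 a' ih =>
    intro s hlen hpw hca hs
    match s with
    | [] => simp at hlen
    | s0 :: s' =>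
      simp only [List.length_cons, add_left_inj] at hlen
      rw [List.pairwise_cons] at hpw
      obtain ⟨hlt, hpw'⟩ := hpw
      have hca' : ∀ x ∈ a', c ≤ x := fun x hx => hca x (List.mem_cons_of_mem _ hx)
      obtain ⟨hS0, hS⟩ := ih s' hlen hpw' hca' (fun y hy => hs y (List.mem_cons_of_mem _ hy))
      have ha0 : c ≤ a0 := hca a0 (List.mem_cons_self)
      have hzip : (List.zipWith (· * ·) (a0 :: a') (s0 :: s')).sum
          = a0 * s0 + (List.zipWith (· * ·) a' s').sum := by simp
      rw [hzip]
      rcases hs s0 (List.mem_cons_self) with h0 | h1 | h3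
      · subst h0
        simp only [mul_zero, zero_add]
        refine ⟨hS0, ?_⟩
        rcases hS with h | h | h
        · exact Or.inl h
        · exact Or.inr (Or.inl (List.mem_cons_of_mem _ h))
        · exact Or.inr (Or.inr h)
      · subst h1
        simp only [mul_one]
        refine ⟨by linarith, ?_⟩
        rcases hS with h | h | h
        · rw [h, add_zero]; exact Or.inr (Or.inl (List.mem_cons_self))
        · have := hlt _ h
          exact Or.inr (Or.inr (by linarith))
        · exact Or.inr (Or.inr (by linarith))
      · have : 3 * c ≤ a0 * s0 := by nlinarith
        exact ⟨by linarith, Or.inr (Or.inr (by linarith))⟩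

lemma rep_aux (m : ℤ) (hm : 3 ≤ m) (n i : ℕ) (hn : 2 ≤ n) (j : ℤ)
    (hj1 : (n : ℤ) ≤ j) (hj2 : j ≤ (n : ℤ) + i) :
    j ∈ Rset m ((List.range (i + 1)).map (fun k : ℕ => (n : ℤ) + (k : ℤ))) := by
  have hn' : (2 : ℤ) ≤ (n : ℤ) := by exact_mod_cast hn
  obtain ⟨t, ht, rfl⟩ : ∃ t : ℕ, t ≤ i ∧ j = (n : ℤ) + t := by
    refine ⟨(j - n).toNat, by omega, by omega⟩
  refine ⟨by omega, (List.range (i + 1)).map (fun k => if k = t then (1:ℤ) else 0),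
    by simp, ?_, ?_⟩
  · intro y hy
    simp only [List.mem_map] at hy
    obtain ⟨k, -, rfl⟩ := hy
    by_cases hk : k = t
    · refine ⟨1, ?_⟩; rw [if_pos hk]; ring
    · refine ⟨0, ?_⟩; rw [if_neg hk]; ring
  · rw [List.zipWith_map, List.zipWith_self]
    have h0 : ((List.range (i+1)).map
          (fun k => ((n:ℤ) + k) * (if k = t then (1:ℤ) else 0))).sum
        = ∑ k ∈ Finset.range (i+1), ((n:ℤ) + k) * (if k = t then (1:ℤ) else 0) := rfl
    rw [h0, Finset.sum_congr rfl (fun k _ => by rw [mul_ite, mul_one, mul_zero]),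
      Finset.sum_ite_eq' (Finset.range (i+1)) t (fun k => (n:ℤ) + k)]
    simp [Finset.mem_range, Nat.lt_succ_iff, ht]

lemma nrep_aux (m : ℤ) (hm : 3 ≤ m) (hm5 : m ≠ 5) (n i : ℕ) (hn : 2 ≤ n)
    (hi : i ≤ n - 1) :
    ((n : ℤ) + i + 1) ∉ Rset m ((List.range (i + 1)).map (fun k : ℕ => (n : ℤ) + (k : ℤ))) := by
  have hn' : (2 : ℤ) ≤ (n : ℤ) := by exact_mod_cast hn
  have hi' : (i : ℤ) ≤ (n : ℤ) - 1 := by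
    have : (i : ℤ) ≤ ((n - 1 : ℕ) : ℤ) := by exact_mod_cast hi
    omega
  rintro ⟨-, s, hlen, hgp, hsum⟩
  have hpw : ((List.range (i + 1)).map (fun k : ℕ => (n : ℤ) + (k : ℤ))).Pairwise (· < ·) := by
    rw [List.pairwise_map]
    exact (List.pairwise_lt_range (n := i + 1)).imp (fun h => by omega)
  have hca : ∀ x ∈ (List.range (i + 1)).map (fun k : ℕ => (n : ℤ) + (k : ℤ)), (n : ℤ) ≤ x := by
    intro x hx
    simp only [List.mem_map, List.mem_range] at hx
    obtain ⟨k, -, rfl⟩ := hx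
    omega
  obtain ⟨-, hS⟩ := sum_cases (n : ℤ) (by omega) _ s hlen.symm hpw hca
    (fun y hy => gp_cases hm hm5 (hgp y hy))
  rw [← hsum] at hS
  rcases hS with h | h | h
  · omega
  · simp only [List.mem_map, List.mem_range, Nat.lt_succ_iff] at h
    obtain ⟨k, hk, hk2⟩ := h
    have hk' : (k : ℤ) ≤ (i : ℤ) := by exact_mod_cast hk
    omega
  · omega

theorem psi_of_initial_segment (m : ℤ) (hm : 3 ≤ m) (hm5 : m ≠ 5)
    (n : ℕ) (hn : 2 ≤ n) (i : ℕ) (hi : i ≤ n - 1) :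
    IsLeast (Set.Ici (n : ℤ) \ Rset m ((List.range (i + 1)).map (fun j => (n : ℤ) + j)))
        ((n : ℤ) + i + 1) ∧
      (∀ j : ℤ, (n : ℤ) ≤ j → j ≤ (n : ℤ) + i →
        j ∈ Rset m ((List.range (i + 1)).map (fun j => (n : ℤ) + j))) ∧
      ((n : ℤ) + i + 1) ∉ Rset m ((List.range (i + 1)).map (fun j => (n : ℤ) + j)) := by
  have hn' : (2 : ℤ) ≤ (n : ℤ) := by exact_mod_cast hn
  have hA : ((List.range (i + 1)).map (fun j => (n : ℤ) + j))
      = (List.range (i + 1)).map (fun k : ℕ => (n : ℤ) + (k : ℤ)) := by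
    simp [List.flatMap_def, List.map_flatten, List.map_map, Function.comp]
    induction (List.range (i + 1)) with
    | nil => rfl
    | cons x l ih => simp_all
  rw [hA]
  have hrep := rep_aux m hm n i hn
  have hnrep := nrep_aux m hm hm5 n i hn hi
  refine ⟨⟨⟨by simp only [Set.mem_Ici]; omega, hnrep⟩, ?_⟩, hrep, hnrep⟩
  rintro x ⟨hx1, hx2⟩
  by_contra hlt
  push_neg at hlt
  exact hx2 (hrep x (by simpa using hx1) (by omega))
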